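/- Let 0 < ε < 1 and let Ω_ε = {λ ∈ ℂ : |Re λ| ≤ ε|λ| and Im λ ≤ -1 + ε}. Define coefficients Γ_k(λ) by the recurrence Γ_0(λ) = 1 and Γ_k(λ) = (ρ(ρ-1)/(k(k - iλ))) · Σ_{j=0}^{k-1} (k - j) Γ_j(λ) for k ≥ 1, where ρ = (n-1)/2 with n ≥ 2 a fixed integer. Then there exist ν ≥ 1 and C > 0 such that for every k ∈ ℕ* and every λ ∈ ℂ \ Ω_ε, one has |Γ_k(λ)| ≤ C · k^ν · (1 + |λ|)^{-1}. -/

import Mathlib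

open Complex Finset

private lemma pow_aux (m : ℕ) : ∀ x : ℝ, 0 ≤ x →
    x ^ m * (m + 1) + x ^ (m + 1) ≤ (x + 1) ^ (m + 1) := by
  induction m with
  | zero => intro x hx; simp; linarith
  | succ m ih =>
    intro x hx
    have h := ih x hx
    have hx1 : (0:ℝ) ≤ x + 1 := by linarith
    have h2 : (x+1) * (x ^ m * (m+1) + x ^ (m+1)) ≤ (x+1) * (x+1)^(m+1) :=
      mul_le_mul_of_nonneg_left h hx1
    have h3 : x ^ (m+1) * ((m:ℝ)+1+1) + x ^ (m+1+1)
        ≤ (x+1) * (x ^ m * (m+1) + x ^ (m+1)) := by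
      have := pow_nonneg hx m
      push_cast
      ring_nf
      nlinarith [pow_nonneg hx m, pow_nonneg hx (m+1)]
    push_cast
    calc x ^ (m+1) * ((m:ℝ)+1+1) + x ^ (m+1+1) ≤ (x+1) * (x+1)^(m+1) := le_trans h3 h2
      _ = (x+1)^(m+1+1) := by ring
    
private lemma sum_pow_le (m : ℕ) : ∀ k : ℕ,
    (∑ j ∈ Finset.range k, (j:ℝ)^m) * (m+1) ≤ (k:ℝ)^(m+1) := by
  intro k
  induction k with
  | zero => simp
  | succ k ih =>
    rw [Finset.sum_range_succ]
    have h := pow_aux m k (Nat.cast_nonneg k)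
    push_cast
    nlinarith

private lemma key_bound (ε : ℝ) (hε0 : 0 < ε) (hε1 : ε < 1) (lam : ℂ)
    (hlam : ¬ (|lam.re| ≤ ε * ‖lam‖ ∧ lam.im ≤ -1 + ε))
    (k : ℕ) (hk : 1 ≤ k) :
    ε/8 * k ≤ ‖(k:ℂ) - Complex.I * lam‖ ∧
    ε/8 * (1 + ‖lam‖) ≤ ‖(k:ℂ) - Complex.I * lam‖ := by
  set x := lam.re with hxdef
  set y := lam.im with hydef
  set r := ‖lam‖ with hrdef
  set N := ‖(k:ℂ) - Complex.I * lam‖ with hNdef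
  have hre : ((k:ℂ) - Complex.I * lam).re = k + y := by
    simp [Complex.sub_re, Complex.mul_re, hydef]
  have him : ((k:ℂ) - Complex.I * lam).im = -x := by
    simp [Complex.sub_im, Complex.mul_im, hxdef]
  have hN1 : k + y ≤ N := by
    have := Complex.abs_re_le_norm ((k:ℂ) - Complex.I * lam)
    rw [hre] at this
    exact le_trans (le_abs_self _) this
  have hN2 : |x| ≤ N := by
    have := Complex.abs_im_le_norm ((k:ℂ) - Complex.I * lam)
    rw [him, abs_neg] at this
    exact this
  have hx : |x| ≤ r := Complex.abs_re_le_norm lam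
  have hy : |y| ≤ r := Complex.abs_im_le_norm lam
  have hr2 : r ≤ |x| + |y| := Complex.norm_le_abs_re_add_abs_im lam
  have hr0 : 0 ≤ r := norm_nonneg lam
  have hk1 : (1:ℝ) ≤ k := by exact_mod_cast hk
  have hy' : -y ≤ |y| := neg_le_abs y
  have hy'' : y ≤ |y| := le_abs_self y
  have hx' : x ≤ |x| := le_abs_self x
  have hx0 : 0 ≤ |x| := abs_nonneg x
  clear_value x y r N
  rcases not_and_or.mp hlam with h | h
  · push_neg at h
    -- ε * r < |x|
    constructor
    · rcases le_or_gt (k:ℝ) (2*r) with hc | hc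
      · nlinarith
      · nlinarith
    · rcases le_or_gt (1/2 : ℝ) r with hc | hc
      · nlinarith
      · nlinarith
  · push_neg at h
    -- -1 + ε < y
    constructor
    · nlinarith [mul_nonneg (sub_nonneg.mpr hk1) (by linarith : (0:ℝ) ≤ 1 - ε/8)]
    · rcases le_or_gt 0 y with hc | hc
      · have hyy : |y| = y := abs_of_nonneg hc
        nlinarith [mul_nonneg (by linarith : (0:ℝ) ≤ 1/2 - ε/8) (by linarith : (0:ℝ) ≤ 1 + r)]
      · have hyy : |y| = -y := abs_of_neg hc
        rcases le_or_gt (|x|) 1 with hd | hd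
        · nlinarith [mul_nonneg hε0.le (by linarith : (0:ℝ) ≤ 2 - r)]
        · have h1 : 1 + r ≤ 3*|x| := by linarith
          calc ε/8*(1+r) ≤ ε/8*(3*|x|) := by
                apply mul_le_mul_of_nonneg_left h1 (by linarith)
            _ ≤ 1*|x| := by
                have := mul_le_mul_of_nonneg_right (show ε/8*3 ≤ 1 by linarith) hx0
                linarith
            _ ≤ N := by linarith

theorem gamma_coeff_bound (n : ℕ) (hn : 2 ≤ n) (ε : ℝ) (hε0 : 0 < ε) (hε1 : ε < 1)
    (ρ : ℝ) (hρ : ρ = ((n : ℝ) - 1) / 2)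
    (G : ℕ → ℂ → ℂ)
    (hG0 : ∀ lam : ℂ, G 0 lam = 1)
    (hGrec : ∀ k : ℕ, 1 ≤ k → ∀ lam : ℂ,
      G k lam = ((ρ : ℂ) * ((ρ : ℂ) - 1) / ((k : ℂ) * ((k : ℂ) - Complex.I * lam))) *
        ∑ j ∈ Finset.range k, ((k : ℂ) - (j : ℂ)) * G j lam) :
    ∃ ν : ℝ, 1 ≤ ν ∧ ∃ C : ℝ, 0 < C ∧ ∀ k : ℕ, 1 ≤ k → ∀ lam : ℂ,
      ¬ (|lam.re| ≤ ε * ‖lam‖ ∧ lam.im ≤ -1 + ε) →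
      ‖G k lam‖ ≤ C * (k : ℝ) ^ ν * (1 + ‖lam‖)⁻¹ := by
  have hρ2 : (1:ℝ)/2 ≤ ρ := by
    have h2 : (2:ℝ) ≤ (n:ℝ) := by exact_mod_cast hn
    rw [hρ]; linarith
  have hρpos : 0 < ρ := by linarith
  set A : ℝ := ε/8 with hA
  have hA0 : 0 < A := by positivity
  set C : ℝ := 2 * ρ^2 / A with hC
  have hC0 : 0 < C := div_pos (by nlinarith) hA0
  set m : ℕ := max 1 ⌈C⌉₊ with hm
  have hm1 : 1 ≤ m := le_max_left _ _
  have hmC : C ≤ (m:ℝ) + 1 := by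
    have h1 : C ≤ (⌈C⌉₊ : ℝ) := Nat.le_ceil C
    have h2 : ((⌈C⌉₊ : ℕ) : ℝ) ≤ (m : ℝ) := by
      exact_mod_cast Nat.cast_le.mpr (le_max_right 1 ⌈C⌉₊)
    linarith
  have hρC : ρ^2 = C*A/2 := by rw [hC]; field_simp
  have habs : |ρ * (ρ - 1)| ≤ ρ^2 := by
    rw [abs_le]; constructor <;> nlinarith
  have main : ∀ k : ℕ, ∀ lam : ℂ,
      ¬ (|lam.re| ≤ ε * ‖lam‖ ∧ lam.im ≤ -1 + ε) → 1 ≤ k →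
      ‖G k lam‖ ≤ C * (k:ℝ)^m / (1 + ‖lam‖) := by
    intro k
    induction k using Nat.strong_induction_on with
    | _ k ih =>
      intro lam hlam hk
      have hk0 : (0:ℝ) < k := by exact_mod_cast hk
      have hk1 : (1:ℝ) ≤ k := by exact_mod_cast hk
      set r := ‖lam‖ with hr
      have hr0 : 0 ≤ r := norm_nonneg lam
      have h1r : (0:ℝ) < 1 + r := by linarith
      obtain ⟨hNk0, hNr0⟩ := key_bound ε hε0 hε1 lam hlam k hk
      set N := ‖(k:ℂ) - Complex.I * lam‖ with hN
      have hN0 : 0 < N := lt_of_lt_of_le (by positivity) hNk0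
      have hNk : A * (k:ℝ) ≤ N := by rw [hA]; exact hNk0
      have hNr : A * (1 + r) ≤ N := by rw [hA, hr]; exact hNr0
      set S : ℝ := ∑ j ∈ Finset.range k, (j:ℝ)^m with hS
      have hS0 : 0 ≤ S := Finset.sum_nonneg fun j _ => by positivity
      have hSb : S * ((m:ℝ)+1) ≤ (k:ℝ)^(m+1) := by
        have := sum_pow_le m k; push_cast at this ⊢; linarith
      have hkm1 : (1:ℝ) ≤ (k:ℝ)^m := by
        have := pow_le_pow_left₀ (by norm_num : (0:ℝ) ≤ 1) hk1 m
        simpa using this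
      -- coefficient bound
      have hcoef : ‖(ρ:ℂ) * ((ρ:ℂ) - 1) / ((k:ℂ) * ((k:ℂ) - Complex.I * lam))‖
          ≤ ρ^2 / ((k:ℝ) * N) := by
        rw [norm_div, norm_mul, norm_mul]
        have e1 : (ρ:ℂ) * ((ρ:ℂ) - 1) = (((ρ * (ρ-1)) : ℝ) : ℂ) := by push_cast; ring
        have e2 : ‖(ρ:ℂ)‖ * ‖(ρ:ℂ) - 1‖ = |ρ * (ρ-1)| := by
          rw [← norm_mul, e1, Complex.norm_real, Real.norm_eq_abs]
        rw [e2, Complex.norm_natCast]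
        gcongr
      -- sum bound
      have hsum : ‖∑ j ∈ Finset.range k, ((k:ℂ) - (j:ℂ)) * G j lam‖
          ≤ (k:ℝ) * (C * S / (1+r) + 1) := by
        calc ‖∑ j ∈ Finset.range k, ((k:ℂ) - (j:ℂ)) * G j lam‖
            ≤ ∑ j ∈ Finset.range k, ‖((k:ℂ) - (j:ℂ)) * G j lam‖ :=
              norm_sum_le _ _
          _ ≤ ∑ j ∈ Finset.range k,
                (k:ℝ) * (C * (j:ℝ)^m / (1+r) + if j = 0 then 1 else 0) := by
              apply Finset.sum_le_sum
              intro j hj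
              have hjk : j < k := Finset.mem_range.mp hj
              have hjk' : (j:ℝ) ≤ (k:ℝ) := by exact_mod_cast hjk.le
              have hj0' : (0:ℝ) ≤ (j:ℝ) := Nat.cast_nonneg j
              rw [norm_mul]
              have habsjk : ‖(k:ℂ) - (j:ℂ)‖ = (k:ℝ) - (j:ℝ) := by
                have e : (k:ℂ) - (j:ℂ) = ((((k:ℝ) - (j:ℝ)) : ℝ) : ℂ) := by push_cast; ring
                rw [e, Complex.norm_real, Real.norm_eq_abs, _root_.abs_of_nonneg (by linarith)]
              rw [habsjk]
              rcases Nat.eq_zero_or_pos j with hj0 | hj0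
              · subst hj0
                rw [hG0, norm_one, mul_one, if_pos rfl]
                have hz : ((0:ℕ):ℝ)^m = 0 := by
                  rw [Nat.cast_zero, zero_pow (by omega : m ≠ 0)]
                rw [hz]
                push_cast
                rw [mul_zero, zero_div, zero_add, mul_one]
                linarith
              · have hGj := ih j hjk lam hlam hj0
                rw [if_neg (by omega), add_zero]
                have h1 : ((k:ℝ)-(j:ℝ)) * ‖G j lam‖
                    ≤ (k:ℝ) * (C*(j:ℝ)^m/(1+r)) := by
                  apply mul_le_mul (by linarith) hGj (norm_nonneg _) (by linarith)
                exact h1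
          _ = (k:ℝ) * (C * S / (1+r) + 1) := by
              rw [← Finset.mul_sum]
              congr 1
              rw [Finset.sum_add_distrib]
              congr 1
              · rw [hS, Finset.mul_sum, Finset.sum_div]
              · rw [Finset.sum_ite_eq' (Finset.range k) 0 (fun _ => (1:ℝ))]
                rw [if_pos (Finset.mem_range.mpr (by omega))]
      -- assemble
      rw [hGrec k hk lam, norm_mul]
      have hstep := mul_le_mul hcoef hsum (norm_nonneg _) (by positivity)
      refine le_trans hstep ?_
      have heq : (ρ^2/((k:ℝ)*N)) * ((k:ℝ)*(C*S/(1+r)+1))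
          = ρ^2 * (C*S + (1+r)) / (N*(1+r)) := by
        field_simp
      rw [heq]
      clear_value A C r N S
      have t1 : (C*A/2)*(C*S) ≤ (C/2)*((k:ℝ)^m)*N := by
        have e1 : C*S ≤ ((m:ℝ)+1)*S := mul_le_mul_of_nonneg_right hmC hS0
        have e0 : (C*A/2)*(C*S) ≤ (C*A/2)*(((m:ℝ)+1)*S) :=
          mul_le_mul_of_nonneg_left e1 (by positivity)
        have e2 : (C*A/2)*(S*((m:ℝ)+1)) ≤ (C*A/2)*((k:ℝ)^m*(k:ℝ)) := by
          apply mul_le_mul_of_nonneg_left _ (by positivity)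
          calc S*((m:ℝ)+1) ≤ (k:ℝ)^(m+1) := hSb
            _ = (k:ℝ)^m*(k:ℝ) := pow_succ _ _
        have e3 : (C/2)*((k:ℝ)^m)*(A*(k:ℝ)) ≤ (C/2)*((k:ℝ)^m)*N :=
          mul_le_mul_of_nonneg_left hNk (by positivity)
        linarith [e0, e2, e3]
        
      have t2 : (C*A/2)*(1+r) ≤ (C/2)*((k:ℝ)^m)*N := by
        have e4 : (C/2)*(A*(1+r)) ≤ (C/2)*N := mul_le_mul_of_nonneg_left hNr (by positivity)
        have e5 : (C/2)*N*1 ≤ (C/2)*N*((k:ℝ)^m) :=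
          mul_le_mul_of_nonneg_left hkm1 (by positivity)
        linarith [e4, e5]
      have main2 : ρ^2 * (C*S + (1+r)) ≤ (C*(k:ℝ)^m) * N := by
        rw [hρC]; linarith [t1, t2]
      calc ρ^2 * (C*S + (1+r)) / (N*(1+r)) ≤ (C*(k:ℝ)^m*N) / (N*(1+r)) := by gcongr
        _ = C*(k:ℝ)^m/(1+r) := by
            field_simp
  refine ⟨(m:ℝ), by exact_mod_cast hm1, C, hC0, ?_⟩
  intro k hk lam hlam
  have h := main k lam hlam hk
  rw [Real.rpow_natCast]
  rwa [div_eq_mul_inv] at h
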